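/- Let 𝒳, 𝒜 be nonempty finite types, p_X a probability mass function on 𝒳 with p_X(x₀) > 0 for some x₀, and p a strictly positive channel from 𝒳 to 𝒜. Then over strictly positive probability mass functions q on 𝒜, the Neyman χ² objective q ↦ Σ_{x,a} p_X(x) q(a) (q(a)/p(a|x) − 1) attains its minimum uniquely at q*(a) = (Σ_x p_X(x)/p(a|x))^{−1} / Σ_{a'} (Σ_x p_X(x)/p(a'|x))^{−1}. -/

import Mathlib

open Finset Real

/-- A probability mass function on a finite type. -/
def IsPMF {Z : Type*} [Fintype Z] (p : Z → ℝ) : Prop :=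
  (∀ z, 0 ≤ p z) ∧ ∑ z, p z = 1

/-- A channel from `X` to `A`: a family of pmfs on `A` indexed by `X`. -/
def IsChannel {X A : Type*} [Fintype X] [Fintype A] (W : X → A → ℝ) : Prop :=
  ∀ x, IsPMF (W x)

/-- Expected loss `Σ_{x,a} p_X(x) p_{A|X}(a|x) ℓ(x,a)`. -/
noncomputable def expLoss {X A : Type*} [Fintype X] [Fintype A]
    (pX : X → ℝ) (ℓ : X → A → ℝ) (W : X → A → ℝ) : ℝ :=
  ∑ x, ∑ a, pX x * W x a * ℓ x a

theorem neyman_chi_sq_minimizer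
    {X A : Type*} [Fintype X] [Fintype A] [Nonempty X] [Nonempty A]
    (pX : X → ℝ) (hpX : IsPMF pX) (hpXne : ∃ x₀, 0 < pX x₀)
    (p : X → A → ℝ) (hp : IsChannel p) (hppos : ∀ x a, 0 < p x a) :
    letI qstar : A → ℝ := fun a =>
      (∑ x, pX x / p x a)⁻¹ / ∑ a', (∑ x, pX x / p x a')⁻¹
    (IsPMF qstar ∧ (∀ a, 0 < qstar a)) ∧
      (∀ q : A → ℝ, IsPMF q → (∀ a, 0 < q a) →
        (∑ x, ∑ a, pX x * qstar a * (qstar a / p x a - 1))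
          ≤ ∑ x, ∑ a, pX x * q a * (q a / p x a - 1)) ∧
      (∀ q : A → ℝ, IsPMF q → (∀ a, 0 < q a) →
        (∑ x, ∑ a, pX x * q a * (q a / p x a - 1))
            = (∑ x, ∑ a, pX x * qstar a * (qstar a / p x a - 1)) →
        q = qstar) := by
  set c : A → ℝ := fun a => ∑ x, pX x / p x a with hc_def
  have hc : ∀ a, 0 < c a := by
    intro a
    obtain ⟨x₀, hx₀⟩ := hpXne
    refine Finset.sum_pos' (fun x _ => div_nonneg (hpX.1 x) (hppos x a).le) ?_
    exact ⟨x₀, Finset.mem_univ x₀, div_pos hx₀ (hppos x₀ a)⟩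
  set S : ℝ := ∑ a, (c a)⁻¹ with hS_def
  have hS : 0 < S :=
    Finset.sum_pos (fun a _ => inv_pos.mpr (hc a)) Finset.univ_nonempty
  set qstar : A → ℝ := fun a =>
      (∑ x, pX x / p x a)⁻¹ / ∑ a', (∑ x, pX x / p x a')⁻¹ with hqs
  have hqstar_def : ∀ a, qstar a = (c a)⁻¹ / S := fun a => rfl
  have hqstar_pos : ∀ a, 0 < qstar a := by
    intro a; rw [hqstar_def]; exact div_pos (inv_pos.mpr (hc a)) hS
  have hqstar_sum : ∑ a, qstar a = 1 := by
    simp only [hqstar_def, div_eq_mul_inv]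
    rw [← Finset.sum_mul, ← hS_def, mul_inv_cancel₀ hS.ne']
  have hqstar_pmf : IsPMF qstar := ⟨fun a => (hqstar_pos a).le, hqstar_sum⟩
  -- key: c a * qstar a = S⁻¹
  have hcq : ∀ a, c a * qstar a = S⁻¹ := by
    intro a
    rw [hqstar_def, div_eq_mul_inv, ← mul_assoc, mul_inv_cancel₀ (hc a).ne', one_mul]
  -- objective rewrite
  have key : ∀ q : A → ℝ, (∑ a, q a) = 1 →
      (∑ x, ∑ a, pX x * q a * (q a / p x a - 1)) = (∑ a, c a * q a ^ 2) - 1 := by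
    intro q hq
    rw [Finset.sum_comm]
    have h1 : ∀ a, ∑ x, pX x * q a * (q a / p x a - 1) = c a * q a ^ 2 - q a := by
      intro a
      have : ∀ x, pX x * q a * (q a / p x a - 1)
          = pX x / p x a * q a ^ 2 - pX x * q a := by
        intro x; field_simp
      rw [Finset.sum_congr rfl (fun x _ => this x), Finset.sum_sub_distrib,
        ← Finset.sum_mul, ← Finset.sum_mul, hpX.2, one_mul, hc_def]
    rw [Finset.sum_congr rfl (fun a _ => h1 a), Finset.sum_sub_distrib, hq]
  -- decomposition: Σ c q² = S⁻¹ + Σ c (q - qstar)²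
  have expand : ∀ q : A → ℝ, (∑ a, q a) = 1 →
      (∑ a, c a * q a ^ 2) = S⁻¹ + ∑ a, c a * (q a - qstar a) ^ 2 := by
    intro q hq
    have h1 : ∀ a, c a * (q a - qstar a) ^ 2
        = c a * q a ^ 2 - 2 * (S⁻¹ * q a) + S⁻¹ * qstar a := by
      intro a
      have h2 : c a * (q a - qstar a) ^ 2
          = c a * q a ^ 2 - 2 * ((c a * qstar a) * q a) + (c a * qstar a) * qstar a := by
        ring
      rw [h2, hcq a]
    rw [Finset.sum_congr rfl (fun a _ => h1 a)]
    rw [Finset.sum_add_distrib, Finset.sum_sub_distrib, ← Finset.mul_sum,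
      ← Finset.mul_sum, ← Finset.mul_sum, hq, hqstar_sum]
    ring
  have hstar_val : (∑ a, c a * qstar a ^ 2) = S⁻¹ := by
    rw [expand qstar hqstar_sum]
    simp
  refine ⟨⟨hqstar_pmf, hqstar_pos⟩, ?_, ?_⟩
  · intro q hq _
    rw [key q hq.2, key qstar hqstar_sum, hstar_val, expand q hq.2]
    have : 0 ≤ ∑ a, c a * (q a - qstar a) ^ 2 :=
      Finset.sum_nonneg fun a _ => mul_nonneg (hc a).le (sq_nonneg _)
    linarith
  · intro q hq _ heq
    rw [key q hq.2, key qstar hqstar_sum, hstar_val, expand q hq.2] at heq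
    have hzero : ∑ a, c a * (q a - qstar a) ^ 2 = 0 := by linarith
    have := (Finset.sum_eq_zero_iff_of_nonneg
      (fun a _ => mul_nonneg (hc a).le (sq_nonneg (q a - qstar a)))).mp hzero
    funext a
    have ha := this a (Finset.mem_univ a)
    have : (q a - qstar a) ^ 2 = 0 := by
      rcases mul_eq_zero.mp ha with h | h
      · exact absurd h (hc a).ne'
      · exact h
    have := pow_eq_zero_iff (n := 2) (by norm_num) |>.mp this
    linarith
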